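/- arXiv:2212.05260 — 2 statements merged into one kernel-verified Lean document; each statement's English description precedes it below -/
import Mathlib

section
/- Let Y ~ Exp(1) and C ~ Exp(1) be independent, T = min(Y,C), Δ = 𝟙(Y ≤ C). Define the SCRPS expected penalty S(μ) := E[∫_0^T F_μ²(τ) dτ + Δ·∫_T^∞ S_μ²(τ) dτ], where F_μ, S_μ are the CDF and survival function of Exp(μ). Then S(1.5) < S(1), i.e., the SCRPS is not outcome-independent proper. -/
open MeasureTheory ProbabilityTheory Set Real Filter Topology
open scoped ENNReal NNReal

namespace SCRPS

noncomputable def ν : Measure ℝ :=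
  (volume.restrict (Ioi 0)).withDensity (fun u => ENNReal.ofReal (exp (-u)))

noncomputable def A (μ t : ℝ) : ℝ :=
  t + 2*exp (-μ*t)/μ - (exp (-μ*t))^2/(2*μ) + (1/(2*μ) - 2/μ)

noncomputable def B (μ t : ℝ) : ℝ := (exp (-μ*t))^2/(2*μ)

noncomputable def H (μ : ℝ) (p : ℝ × ℝ) : ℝ :=
  A μ (min p.1 p.2) + (if p.1 ≤ p.2 then 1 else 0) * B μ (min p.1 p.2)

noncomputable def Φ (μ y : ℝ) : ℝ :=
  -(y+1)*exp (-y) - (2/(μ*(μ+1))) * (exp (-μ*y)*exp (-y))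
    + (1/(2*μ*(2*μ+1))) * ((exp (-μ*y))^2 * exp (-y)) + (2/μ - 1/(2*μ))*exp (-y)

noncomputable def I (μ x : ℝ) : ℝ := Φ μ x - Φ μ 0 + (A μ x + B μ x) * exp (-x)

noncomputable def V (μ : ℝ) : ℝ :=
  (1 + 2/(μ*(μ+1)) - 1/(2*μ*(2*μ+1)) + (1/(2*μ) - 2/μ)) - 1/2
    + 2/((μ+1)*(μ+2)) + 1/(2*μ*(2*μ+1)*(2*μ+2))

/-! ### calculus lemmas -/

lemma exp_hasDeriv (a x : ℝ) : HasDerivAt (fun y => exp (a*y)) (a * exp (a*x)) x := by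
  have h : HasDerivAt (fun y : ℝ => a*y) a x := by
    simpa using (hasDerivAt_id x).const_mul a
  simpa [mul_comm] using h.exp

lemma exp_tendsto {a : ℝ} (ha : a < 0) : Tendsto (fun x => exp (a*x)) atTop (𝓝 0) := by
  apply tendsto_exp_atBot.comp
  exact Tendsto.const_mul_atTop_of_neg ha tendsto_id

lemma expIntOn {a : ℝ} (ha : a < 0) (b : ℝ) : IntegrableOn (fun y => exp (a*y)) (Ioi b) := by
  have := exp_neg_integrableOn_Ioi b (show (0:ℝ) < -a by linarith)
  simpa using this

lemma expIntVal {a : ℝ} (ha : a < 0) (b : ℝ) :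
    ∫ y in Ioi b, exp (a*y) = -exp (a*b)/a := by
  have h := integral_Ioi_of_hasDerivAt_of_tendsto' (f := fun y => exp (a*y)/a)
    (f' := fun y => exp (a*y)) (a := b) (m := 0)
    (fun x _ => by
      have h2 := (exp_hasDeriv a x).div_const a
      refine h2.congr_deriv ?_
      field_simp [ne_of_lt ha]) (expIntOn ha b) ?_
  · rw [h]; ring
  · simpa using (exp_tendsto ha).div_const a

lemma intB {μ : ℝ} (hμ : 0 < μ) (t : ℝ) :
    ∫ τ in Ioi t, (exp (-μ*τ))^2 = B μ t := by
  have h := integral_Ioi_of_hasDerivAt_of_nonneg' (a := t)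
    (g := fun τ => -((exp (-μ*τ))^2/(2*μ))) (g' := fun τ => (exp (-μ*τ))^2) (l := 0)
    (fun x _ => by
      have h2 := ((((exp_hasDeriv (-μ) x).pow 2)).div_const (2*μ)).neg
      refine h2.congr_deriv ?_
      field_simp
      ring)
    (fun x _ => by positivity)
    (by
      have := ((exp_tendsto (show -μ < 0 by linarith)).pow 2).div_const (2*μ)
      simpa using this.neg)
  rw [h, B]; ring

lemma intA {μ : ℝ} (hμ : 0 < μ) (t : ℝ) :
    ∫ τ in (0:ℝ)..t, (1 - exp (-μ*τ))^2 = A μ t := by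
  have hd : ∀ x ∈ uIcc (0:ℝ) t, HasDerivAt
      (fun τ => τ + 2*exp (-μ*τ)/μ - (exp (-μ*τ))^2/(2*μ))
      ((1 - exp (-μ*x))^2) x := by
    intro x _
    have h1 := hasDerivAt_id x
    have h2 := ((exp_hasDeriv (-μ) x).const_mul 2).div_const μ
    have h3 := ((exp_hasDeriv (-μ) x).pow 2).div_const (2*μ)
    have := (h1.add h2).sub h3
    refine this.congr_deriv ?_
    field_simp
    ring
  have hint : IntervalIntegrable (fun τ => (1 - exp (-μ*τ))^2) volume 0 t := by
    apply Continuous.intervalIntegrable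
    fun_prop
  have := intervalIntegral.integral_eq_sub_of_hasDerivAt hd hint
  rw [this, A]
  simp [exp_zero]
  ring

lemma hasDerivΦ {μ : ℝ} (hμ : 0 < μ) (x : ℝ) :
    HasDerivAt (Φ μ) (A μ x * exp (-x)) x := by
  have hE : HasDerivAt (fun y : ℝ => exp (-y)) (-exp (-x)) x := by
    have := exp_hasDeriv (-1) x
    simp only [neg_one_mul] at this
    simpa using this
  have hP : HasDerivAt (fun y : ℝ => exp (-μ*y)) (-μ * exp (-μ*x)) x := exp_hasDeriv (-μ) x
  have h1 : HasDerivAt (fun y : ℝ => -(y+1)*exp (-y))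
      ((-1) * exp (-x) + (-(x+1)) * (-exp (-x))) x := by
    exact (((hasDerivAt_id x).add_const 1).neg).mul hE
  have h2 := ((hP.mul hE).const_mul (2/(μ*(μ+1))))
  have h3 := (((hP.pow 2).mul hE).const_mul (1/(2*μ*(2*μ+1))))
  have h4 := hE.const_mul (2/μ - 1/(2*μ))
  have htot := ((h1.sub h2).add h3).add h4
  have e1 : (μ:ℝ) ≠ 0 := hμ.ne'
  have e2 : (μ:ℝ)+1 ≠ 0 := by linarith
  have e3 : 2*(μ:ℝ)+1 ≠ 0 := by linarith
  refine htot.congr_deriv ?_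
  rw [A]
  simp only [Pi.pow_apply]
  field_simp
  ring

lemma intΦ {μ : ℝ} (hμ : 0 < μ) (x : ℝ) :
    ∫ y in (0:ℝ)..x, A μ y * exp (-y) = Φ μ x - Φ μ 0 := by
  apply intervalIntegral.integral_eq_sub_of_hasDerivAt (fun y _ => hasDerivΦ hμ y)
  apply Continuous.intervalIntegrable
  unfold A
  fun_prop

/-! ### the measure ν -/

lemma expIntOn' : IntegrableOn (fun y : ℝ => exp (-y)) (Ioi (0:ℝ)) := by
  have := exp_neg_integrableOn_Ioi (0:ℝ) (one_pos)
  simpa using this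

lemma ν_apply {s : Set ℝ} (hs : MeasurableSet s) :
    ν s = ENNReal.ofReal (∫ u in s ∩ Ioi (0:ℝ), exp (-u)) := by
  rw [ν, withDensity_apply _ hs, Measure.restrict_restrict hs]
  rw [← ofReal_integral_eq_lintegral_ofReal]
  · exact expIntOn'.mono_set (inter_subset_right)
  · exact ae_of_all _ (fun x => (exp_pos _).le)

instance : IsProbabilityMeasure ν := by
  constructor
  rw [ν_apply MeasurableSet.univ]
  simp [integral_exp_neg_Ioi_zero, integral_exp_Iic_zero]

lemma ae_pos : ∀ᵐ x ∂ν, 0 < x := by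
  rw [ae_iff]
  have hset : {x : ℝ | ¬ 0 < x} = Iic 0 := by ext x; simp
  rw [hset, ν_apply measurableSet_Iic]
  have : Iic (0:ℝ) ∩ Ioi 0 = ∅ := by ext x; simp
  simp [this]

lemma integral_ν (g : ℝ → ℝ) :
    ∫ x, g x ∂ν = ∫ x in Ioi (0:ℝ), g x * exp (-x) := by
  have : ν = (volume.restrict (Ioi 0)).withDensity
      (fun u => ((exp (-u)).toNNReal : ℝ≥0∞)) := rfl
  rw [this, integral_withDensity_eq_integral_smul (by fun_prop) g]
  congr 1
  ext x
  rw [NNReal.smul_def, smul_eq_mul, Real.coe_toNNReal _ (exp_pos _).le, mul_comm]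

lemma integrable_ν (g : ℝ → ℝ) :
    Integrable g ν ↔ IntegrableOn (fun x => g x * exp (-x)) (Ioi (0:ℝ)) := by
  rw [ν, integrable_withDensity_iff (by fun_prop)
    (ae_of_all _ (fun x => ENNReal.ofReal_lt_top))]
  unfold IntegrableOn
  congr! 2 with x
  rw [ENNReal.toReal_ofReal (exp_pos _).le]

lemma map_eq {Ω : Type*} [MeasureSpace Ω] [IsProbabilityMeasure (ℙ : Measure Ω)]
    {X : Ω → ℝ} (hX : Measurable X)
    (hlaw : ∀ s : Set ℝ, MeasurableSet s →
      (ℙ (X ⁻¹' s)).toReal = ∫ u in s ∩ Ioi (0:ℝ), exp (-u)) :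
    Measure.map X ℙ = ν := by
  ext s hs
  rw [Measure.map_apply hX hs, ν_apply hs, ← hlaw s hs,
    ENNReal.ofReal_toReal (measure_ne_top _ _)]

/-! ### H and its integrability -/

lemma contA (μ : ℝ) : Continuous (A μ) := by unfold A; fun_prop

lemma H_meas (μ : ℝ) : Measurable (H μ) := by
  have hmin : Measurable (fun p : ℝ×ℝ => min p.1 p.2) := measurable_fst.min measurable_snd
  have hB : Continuous (B μ) := by unfold B; fun_prop
  exact ((contA μ).measurable.comp hmin).add
    ((Measurable.ite (measurableSet_le measurable_fst measurable_snd)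
      measurable_const measurable_const).mul (hB.measurable.comp hmin))

lemma H_bound {μ : ℝ} (hμ : 0 < μ) {p : ℝ × ℝ} (h1 : 0 < p.1) (h2 : 0 < p.2) :
    |H μ p| ≤ p.1 + 6/μ := by
  set t := min p.1 p.2 with ht
  have ht0 : 0 < t := lt_min h1 h2
  have htp : t ≤ p.1 := min_le_left _ _
  set e := exp (-μ*t) with he
  have he0 : 0 < e := exp_pos _
  have he1 : e ≤ 1 := by
    rw [he, exp_le_one_iff]
    nlinarith
  have hm : (0:ℝ) < μ⁻¹ := by positivity
  have k1 : e * μ⁻¹ ≤ μ⁻¹ := by nlinarith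
  have k2 : e^2 * μ⁻¹ ≤ μ⁻¹ := by nlinarith [sq_nonneg e, mul_pos (mul_pos he0 he0) hm]
  have k3 : (0:ℝ) < e * μ⁻¹ := by positivity
  have k4 : (0:ℝ) < e^2 * μ⁻¹ := by positivity
  rw [abs_le]
  unfold H A B
  rw [← ht, ← he]
  constructor <;> (split_ifs <;> (ring_nf; nlinarith [hm, k1, k2, k3, k4, ht0, htp]))

lemma integrable_id_ν : Integrable (fun x : ℝ => x) ν := by
  rw [integrable_ν]
  apply integrableOn_Ioi_deriv_of_nonneg' (g := fun y => -((y+1)*exp (-y)))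
    (g' := fun y => y * exp (-y)) (l := 0)
  · intro x _
    have hE : HasDerivAt (fun y : ℝ => exp (-y)) (-exp (-x)) x := by
      have := exp_hasDeriv (-1) x
      simp only [neg_one_mul] at this
      simpa using this
    have := (((hasDerivAt_id x).add_const 1).mul hE).neg
    refine this.congr_deriv ?_
    simp [id]
    ring
  · intro x hx
    have : (0:ℝ) < x := hx
    positivity
  · have t1 : Tendsto (fun y : ℝ => y * exp (-y)) atTop (𝓝 0) := by
      have := tendsto_pow_mul_exp_neg_atTop_nhds_zero 1
      simpa using this
    have t2 : Tendsto (fun y : ℝ => exp (-y)) atTop (𝓝 0) := by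
      have := exp_tendsto (a := -1) (by norm_num)
      simpa [neg_one_mul] using this
    have := (t1.add t2).neg
    simp only [add_zero, neg_zero] at this
    apply this.congr
    intro y
    ring

lemma H_int {μ : ℝ} (hμ : 0 < μ) : Integrable (H μ) (ν.prod ν) := by
  have hν0 : ν (Iic 0) = 0 := by
    rw [ν_apply measurableSet_Iic]
    have : Iic (0:ℝ) ∩ Ioi 0 = ∅ := by ext x; simp
    simp [this]
  have hae : ∀ᵐ p ∂(ν.prod ν), 0 < p.1 ∧ 0 < p.2 := by
    rw [ae_iff]
    apply measure_mono_null (s := {p : ℝ × ℝ | ¬(0 < p.1 ∧ 0 < p.2)}) (t := (Iic 0 ×ˢ univ) ∪ (univ ×ˢ Iic 0))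
    · intro p hp
      simp only [mem_setOf_eq, not_and_or, not_lt] at hp
      rcases hp with h | h
      · exact Or.inl ⟨h, mem_univ _⟩
      · exact Or.inr ⟨mem_univ _, h⟩
    · apply measure_union_null <;> rw [Measure.prod_prod] <;> simp [hν0]
  have hfst : Integrable (fun p : ℝ×ℝ => p.1) (ν.prod ν) := by
    have hmap : (ν.prod ν).map Prod.fst = ν := by
      rw [Measure.map_fst_prod]; simp
    have h := integrable_id_ν
    rw [← hmap] at h
    exact (integrable_map_measure aestronglyMeasurable_id measurable_fst.aemeasurable).mp h
  have hg : Integrable (fun p : ℝ×ℝ => p.1 + 6/μ) (ν.prod ν) := hfst.add (integrable_const _)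
  apply hg.mono ((H_meas μ).aestronglyMeasurable)
  filter_upwards [hae] with p hp
  refine (H_bound hμ hp.1 hp.2).trans (le_abs_self _)

/-! ### inner integral -/

lemma inner_eq {μ : ℝ} (hμ : 0 < μ) {x : ℝ} (hx : 0 < x) :
    ∫ y, H μ (x, y) ∂ν = I μ x := by
  rw [integral_ν]
  have hsplit : Ioi (0:ℝ) = Ioo 0 x ∪ Ici x := (Ioo_union_Ici_eq_Ioi hx).symm
  have hdisj : Disjoint (Ioo (0:ℝ) x) (Ici x) :=
    (Iio_disjoint_Ici (le_refl x)).mono_left Ioo_subset_Iio_self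
  have heq1 : EqOn (fun y => H μ (x,y) * exp (-y)) (fun y => A μ y * exp (-y)) (Ioo 0 x) := by
    intro y hy
    simp only [H]
    rw [min_eq_right hy.2.le, if_neg (not_le.mpr hy.2)]
    ring
  have heq2 : EqOn (fun y => H μ (x,y) * exp (-y))
      (fun y => (A μ x + B μ x) * exp (-y)) (Ici x) := by
    intro y hy
    simp only [H]
    rw [min_eq_left hy, if_pos (show x ≤ y from hy)]
    ring
  have hint1 : IntegrableOn (fun y => H μ (x,y) * exp (-y)) (Ioo 0 x) := by
    have hc : Continuous (fun y => A μ y * exp (-y)) := by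
      have := contA μ
      fun_prop
    have h : IntervalIntegrable (fun y => A μ y * exp (-y)) volume 0 x :=
      hc.intervalIntegrable 0 x
    rw [intervalIntegrable_iff_integrableOn_Ioo_of_le hx.le] at h
    exact h.congr_fun heq1.symm measurableSet_Ioo
  have hint2 : IntegrableOn (fun y => H μ (x,y) * exp (-y)) (Ici x) := by
    have h : IntegrableOn (fun y => (A μ x + B μ x) * exp (-y)) (Ici x) := by
      rw [integrableOn_Ici_iff_integrableOn_Ioi]
      have := (expIntOn (a := -1) (by norm_num) x).const_mul (A μ x + B μ x)
      simp only [neg_one_mul] at this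
      exact this
    exact h.congr_fun heq2.symm measurableSet_Ici
  rw [hsplit, setIntegral_union hdisj measurableSet_Ici hint1 hint2]
  have v1 : ∫ y in Ioo (0:ℝ) x, H μ (x,y) * exp (-y) = Φ μ x - Φ μ 0 := by
    rw [setIntegral_congr_fun measurableSet_Ioo heq1, ← integral_Ioc_eq_integral_Ioo,
      ← intervalIntegral.integral_of_le hx.le, intΦ hμ]
  have v2 : ∫ y in Ici x, H μ (x,y) * exp (-y) = (A μ x + B μ x) * exp (-x) := by
    rw [setIntegral_congr_fun measurableSet_Ici heq2, integral_Ici_eq_integral_Ioi,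
      integral_const_mul]
    have := expIntVal (a := -1) (by norm_num) x
    simp only [neg_one_mul] at this
    rw [this]
    ring
  rw [v1, v2, I]

/-! ### outer integral -/

lemma outer {μ : ℝ} (hμ : 0 < μ) : ∫ x, I μ x ∂ν = V μ := by
  have m1 : (μ:ℝ) ≠ 0 := hμ.ne'
  have m2 : (μ:ℝ)+1 ≠ 0 := by linarith
  have m3 : 2*(μ:ℝ)+1 ≠ 0 := by linarith
  have m4 : (μ:ℝ)+2 ≠ 0 := by linarith
  have m5 : 2*(μ:ℝ)+2 ≠ 0 := by linarith
  have hpt : ∀ x : ℝ, I μ x * exp (-x) =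
      (1 + 2/(μ*(μ+1)) - 1/(2*μ*(2*μ+1)) + (1/(2*μ) - 2/μ)) * exp ((-1)*x)
      + (-1) * exp ((-2)*x) + (2/(μ+1)) * exp ((-(μ+2))*x)
      + (1/(2*μ*(2*μ+1))) * exp ((-(2*μ+2))*x) := by
    intro x
    have e1 : exp ((-1:ℝ)*x) = exp (-x) := by rw [neg_one_mul]
    have e2 : exp ((-2:ℝ)*x) = exp (-x) * exp (-x) := by
      rw [← exp_add]; congr 1; ring
    have e3 : exp ((-(μ+2))*x) = exp (-μ*x) * (exp (-x) * exp (-x)) := by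
      rw [← exp_add, ← exp_add]; congr 1; ring
    have e4 : exp ((-(2*μ+2))*x) = (exp (-μ*x))^2 * (exp (-x) * exp (-x)) := by
      rw [pow_two, mul_assoc, ← exp_add, ← exp_add, ← exp_add]; congr 1; ring
    rw [e1, e2, e3, e4]
    unfold I Φ A B
    field_simp
    simp only [neg_zero, mul_zero, exp_zero]
    ring
  rw [integral_ν]
  simp only [hpt]
  have i1 := (expIntOn (a := -1) (by norm_num) 0).const_mul
    (1 + 2/(μ*(μ+1)) - 1/(2*μ*(2*μ+1)) + (1/(2*μ) - 2/μ))
  have i2 := (expIntOn (a := -2) (by norm_num) 0).const_mul (-1 : ℝ)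
  have i3 := (expIntOn (a := -(μ+2)) (by linarith) 0).const_mul (2/(μ+1))
  have i4 := (expIntOn (a := -(2*μ+2)) (by linarith) 0).const_mul (1/(2*μ*(2*μ+1)))
  have i12 : Integrable (fun x =>
      (1 + 2/(μ*(μ+1)) - 1/(2*μ*(2*μ+1)) + (1/(2*μ) - 2/μ)) * exp ((-1)*x)
        + (-1) * exp ((-2)*x)) (volume.restrict (Ioi 0)) := i1.add i2
  have i123 : Integrable (fun x =>
      (1 + 2/(μ*(μ+1)) - 1/(2*μ*(2*μ+1)) + (1/(2*μ) - 2/μ)) * exp ((-1)*x)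
        + (-1) * exp ((-2)*x) + (2/(μ+1)) * exp ((-(μ+2))*x)) (volume.restrict (Ioi 0)) :=
    i12.add i3
  rw [integral_add i123 i4, integral_add i12 i3,
    integral_add i1 i2, integral_const_mul, integral_const_mul, integral_const_mul,
    integral_const_mul, expIntVal (by norm_num : (-1:ℝ) < 0),
    expIntVal (by norm_num : (-2:ℝ) < 0), expIntVal (show -(μ+2) < 0 by linarith),
    expIntVal (show -(2*μ+2) < 0 by linarith)]
  simp only [mul_zero, exp_zero, V, neg_div_neg_eq]
  field_simp
  ring

lemma Sval {Ω : Type*} [MeasureSpace Ω] [IsProbabilityMeasure (ℙ : Measure Ω)]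
    (Y C : Ω → ℝ) (hY : Measurable Y) (hC : Measurable C)
    (hindep : IndepFun Y C ℙ)
    (hlawY : ∀ s : Set ℝ, MeasurableSet s →
      (ℙ (Y ⁻¹' s)).toReal = ∫ u in s ∩ Ioi (0:ℝ), exp (-u))
    (hlawC : ∀ s : Set ℝ, MeasurableSet s →
      (ℙ (C ⁻¹' s)).toReal = ∫ u in s ∩ Ioi (0:ℝ), exp (-u))
    (S : ℝ → ℝ)
    (hS : ∀ μ : ℝ, S μ =
      ∫ ω, ((∫ τ in (0:ℝ)..(min (Y ω) (C ω)), (1 - exp (-μ * τ)) ^ 2)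
        + (if Y ω ≤ C ω then (1:ℝ) else 0)
          * ∫ τ in Ioi (min (Y ω) (C ω)), (exp (-μ * τ)) ^ 2) ∂ℙ)
    (μ : ℝ) (hμ : 0 < μ) : S μ = V μ := by
  have hprod : Measure.map (fun ω => (Y ω, C ω)) ℙ = ν.prod ν := by
    rw [(indepFun_iff_map_prod_eq_prod_map_map hY.aemeasurable hC.aemeasurable).mp hindep,
      map_eq hY hlawY, map_eq hC hlawC]
  have h1 : S μ = ∫ ω, H μ (Y ω, C ω) ∂ℙ := by
    rw [hS μ]
    simp only [intA hμ, intB hμ]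
    rfl
  rw [h1,
    show (fun ω => H μ (Y ω, C ω)) = (fun ω => H μ ((fun ω => (Y ω, C ω)) ω)) from rfl,
    ← integral_map (hY.prodMk hC).aemeasurable
      (by rw [hprod]; exact (H_meas μ).aestronglyMeasurable),
    hprod, integral_prod _ (H_int hμ)]
  rw [← outer hμ]
  apply integral_congr_ae
  filter_upwards [ae_pos] with x hx
  exact inner_eq hμ hx

end SCRPS

open SCRPS

/-- Improperness of the SCRPS: with `Y, C` i.i.d. `Exp(1)` independent,
`T = min(Y,C)`, `Δ = 𝟙(Y ≤ C)`, and
`S(μ) := E[∫_0^T F_μ²(τ) dτ + Δ ∫_T^∞ S_μ²(τ) dτ]` (for `Exp(μ)` predictions),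
we have `S(1.5) < S(1)`: the wrong prediction beats the truth. -/
theorem stmt_5 {Ω : Type*} [MeasureSpace Ω] [IsProbabilityMeasure (ℙ : Measure Ω)]
    (Y C : Ω → ℝ) (hY : Measurable Y) (hC : Measurable C)
    (hindep : IndepFun Y C ℙ)
    (hlawY : ∀ s : Set ℝ, MeasurableSet s →
      (ℙ (Y ⁻¹' s)).toReal = ∫ u in s ∩ Ioi (0:ℝ), exp (-u))
    (hlawC : ∀ s : Set ℝ, MeasurableSet s →
      (ℙ (C ⁻¹' s)).toReal = ∫ u in s ∩ Ioi (0:ℝ), exp (-u))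
    (S : ℝ → ℝ)
    (hS : ∀ μ : ℝ, S μ =
      ∫ ω, ((∫ τ in (0:ℝ)..(min (Y ω) (C ω)), (1 - exp (-μ * τ)) ^ 2)
        + (if Y ω ≤ C ω then (1:ℝ) else 0)
          * ∫ τ in Ioi (min (Y ω) (C ω)), (exp (-μ * τ)) ^ 2) ∂ℙ) :
    S (3/2) < S 1 := by
  rw [Sval Y C hY hC hindep hlawY hlawC S hS (3/2) (by norm_num),
    Sval Y C hY hC hindep hlawY hlawC S hS 1 one_pos]
  unfold V
  norm_num
end

section
/- Let Y ⊥ C be nonnegative absolutely continuous random variables, T = min(Y,C), Δ = 𝟙(Y ≤ C). Then the expected RISBS with true weight S_C equals the expected (uncensored) integrated Brier score: E[Δ·∫_0^{τ*}(𝟙(T ≤ τ) − F_p(τ))² dτ / S_C(T)] = E[∫_0^{τ*}(𝟙(Y ≤ τ) − F_p(τ))² dτ]. -/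
open MeasureTheory ProbabilityTheory Set

private lemma meas_indicator_monoOn {s : Set ℝ} (hs : s.OrdConnected) (φ : ℝ → ℝ)
    (hmono : ∀ x ∈ s, ∀ z ∈ s, x ≤ z → φ x ≤ φ z) :
    Measurable (s.indicator φ) := by
  apply measurable_of_Iio
  intro r
  have hA : ∀ r : ℝ, MeasurableSet {y | y ∈ s ∧ φ y < r} := by
    intro r
    refine Set.OrdConnected.measurableSet ?_
    refine ⟨fun x hx z hz y hy => ?_⟩
    have hys : y ∈ s := hs.out hx.1 hz.1 hy
    exact ⟨hys, lt_of_le_of_lt (hmono y hys z hz.1 hy.2) hz.2⟩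
  by_cases hr : (0:ℝ) < r
  · have : s.indicator φ ⁻¹' Iio r = {y | y ∈ s ∧ φ y < r} ∪ sᶜ := by
      ext y
      by_cases hy : y ∈ s <;> simp [Set.indicator_apply, hy, hr]
    rw [this]; exact (hA r).union hs.measurableSet.compl
  · have : s.indicator φ ⁻¹' Iio r = {y | y ∈ s ∧ φ y < r} := by
      ext y
      by_cases hy : y ∈ s <;> simp [Set.indicator_apply, hy, hr]
    rw [this]; exact hA r

private lemma measurable_g (Fp : ℝ → ℝ) (τstar : ℝ) (hτ : 0 ≤ τstar) :
    Measurable (fun y => ∫ τ in (0:ℝ)..τstar, ((if y ≤ τ then (1:ℝ) else 0) - Fp τ) ^ 2) := by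
  set h : ℝ → ℝ := fun τ => ((0:ℝ) - Fp τ) ^ 2 with hh
  set k : ℝ → ℝ := fun τ => ((1:ℝ) - Fp τ) ^ 2 with hk
  set s : Set ℝ :=
    {y | IntegrableOn h (Ioo 0 y) volume ∧ IntegrableOn k (Icc y τstar) volume} with hsdef
  have hsOrd : s.OrdConnected := by
    refine ⟨fun x hx z hz y hy => ?_⟩
    exact ⟨hz.1.mono_set (Ioo_subset_Ioo le_rfl hy.2),
      hx.2.mono_set (Icc_subset_Icc hy.1 le_rfl)⟩
  set φ₁ : ℝ → ℝ := fun y => ∫ τ in Ioo (0:ℝ) y, h τ with hφ₁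
  set φ₂ : ℝ → ℝ := fun y => ∫ τ in Icc y τstar, k τ with hφ₂
  have hmono₁ : ∀ x ∈ s, ∀ z ∈ s, x ≤ z → φ₁ x ≤ φ₁ z := by
    intro x hx z hz hxz
    refine setIntegral_mono_set hz.1 (Filter.Eventually.of_forall fun τ => sq_nonneg _)
      (Filter.Eventually.of_forall (Ioo_subset_Ioo le_rfl hxz))
  have hmono₂ : ∀ x ∈ s, ∀ z ∈ s, x ≤ z → -φ₂ x ≤ -φ₂ z := by
    intro x hx z hz hxz
    simp only [neg_le_neg_iff]
    exact setIntegral_mono_set hx.2 (Filter.Eventually.of_forall fun τ => sq_nonneg _)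
      (Filter.Eventually.of_forall (Icc_subset_Icc hxz le_rfl))
  have meas₁ : Measurable (s.indicator φ₁) := meas_indicator_monoOn hsOrd φ₁ hmono₁
  have meas₂ : Measurable (s.indicator φ₂) := by
    have h0 : s.indicator φ₂ = fun y => -(s.indicator (fun z => -φ₂ z) y) := by
      funext y
      by_cases hy : y ∈ s <;> simp [Set.indicator_apply, hy]
    rw [h0]
    exact (meas_indicator_monoOn hsOrd _ hmono₂).neg
  have key : ∀ y, (∫ τ in (0:ℝ)..τstar, ((if y ≤ τ then (1:ℝ) else 0) - Fp τ) ^ 2) =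
      if y ≤ 0 then ∫ τ in Ioc (0:ℝ) τstar, k τ
      else if τstar < y then ∫ τ in Ioc (0:ℝ) τstar, h τ
      else s.indicator φ₁ y + s.indicator φ₂ y := by
    intro y
    rw [intervalIntegral.integral_of_le hτ]
    by_cases hy0 : y ≤ 0
    · rw [if_pos hy0]
      refine setIntegral_congr_fun measurableSet_Ioc fun τ hτ' => ?_
      rw [if_pos (hy0.trans hτ'.1.le)]
    · rw [if_neg hy0]
      push_neg at hy0
      by_cases hyτ : τstar < y
      · rw [if_pos hyτ]
        refine setIntegral_congr_fun measurableSet_Ioc fun τ hτ' => ?_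
        rw [if_neg (by push_neg; exact lt_of_le_of_lt hτ'.2 hyτ)]
      · rw [if_neg hyτ]
        push_neg at hyτ
        have hsplit : Ioc (0:ℝ) τstar = Ioo 0 y ∪ Icc y τstar := by
          ext τ
          constructor
          · rintro ⟨h1, h2⟩
            by_cases hτy : τ < y
            · exact Or.inl ⟨h1, hτy⟩
            · exact Or.inr ⟨le_of_not_gt hτy, h2⟩
          · rintro (⟨h1, h2⟩ | ⟨h1, h2⟩)
            · exact ⟨h1, h2.le.trans hyτ⟩
            · exact ⟨lt_of_lt_of_le hy0 h1, h2⟩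
        by_cases hmem : y ∈ s
        · have hi1 : IntegrableOn
              (fun τ => ((if y ≤ τ then (1:ℝ) else 0) - Fp τ) ^ 2) (Ioo 0 y) volume := by
            refine hmem.1.congr_fun (fun τ hτ' => ?_) measurableSet_Ioo
            rw [if_neg (not_le.mpr hτ'.2)]
          have hi2 : IntegrableOn
              (fun τ => ((if y ≤ τ then (1:ℝ) else 0) - Fp τ) ^ 2) (Icc y τstar) volume := by
            refine hmem.2.congr_fun (fun τ hτ' => ?_) measurableSet_Icc
            rw [if_pos hτ'.1]
          have hdisj : Disjoint (Ioo (0:ℝ) y) (Icc y τstar) := by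
            refine Set.disjoint_left.mpr ?_
            rintro τ ⟨_, h2⟩ ⟨h3, _⟩
            exact absurd h3 (not_le.mpr h2)
          rw [hsplit, setIntegral_union hdisj measurableSet_Icc hi1 hi2,
            Set.indicator_of_mem hmem, Set.indicator_of_mem hmem]
          congr 1
          · exact setIntegral_congr_fun measurableSet_Ioo fun τ hτ' => by
              rw [if_neg (not_le.mpr hτ'.2)]
          · exact setIntegral_congr_fun measurableSet_Icc fun τ hτ' => by
              rw [if_pos hτ'.1]
        · rw [Set.indicator_of_notMem hmem, Set.indicator_of_notMem hmem, add_zero]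
          apply integral_undef
          intro hcon
          apply hmem
          have hcon' : IntegrableOn
              (fun τ => ((if y ≤ τ then (1:ℝ) else 0) - Fp τ) ^ 2) (Ioc 0 τstar) volume := hcon
          constructor
          · refine (hcon'.mono_set ?_).congr_fun (fun τ hτ' => ?_) measurableSet_Ioo
            · rw [hsplit]; exact subset_union_left
            · beta_reduce; rw [if_neg (not_le.mpr hτ'.2)]
          · refine (hcon'.mono_set ?_).congr_fun (fun τ hτ' => ?_) measurableSet_Icc
            · rw [hsplit]; exact subset_union_right
            · beta_reduce; rw [if_pos hτ'.1]
  have : (fun y => ∫ τ in (0:ℝ)..τstar, ((if y ≤ τ then (1:ℝ) else 0) - Fp τ) ^ 2) =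
      fun y => if y ≤ 0 then ∫ τ in Ioc (0:ℝ) τstar, k τ
      else if τstar < y then ∫ τ in Ioc (0:ℝ) τstar, h τ
      else s.indicator φ₁ y + s.indicator φ₂ y := funext key
  rw [this]
  refine Measurable.ite (measurableSet_le measurable_id measurable_const) measurable_const ?_
  exact Measurable.ite (measurableSet_lt measurable_const measurable_id) measurable_const
    (meas₁.add meas₂)

/-- The expected RISBS with the true censoring weight `S_C` equals the expected
uncensored integrated Brier score: with `Y ⊥ C` nonnegative absolutely continuous,
`T = min(Y,C)`, `Δ = 𝟙(Y ≤ C)`,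
`E[Δ·∫_0^{τ*}(𝟙(T ≤ τ) - F_p(τ))² dτ / S_C(T)]
  = E[∫_0^{τ*}(𝟙(Y ≤ τ) - F_p(τ))² dτ]`. -/
theorem stmt_19 {Ω : Type*} [MeasureSpace Ω] [IsProbabilityMeasure (ℙ : Measure Ω)]
    (Y C : Ω → ℝ) (hY : Measurable Y) (hC : Measurable C)
    (hYnn : ∀ ω, 0 ≤ Y ω) (hCnn : ∀ ω, 0 ≤ C ω)
    (hindep : IndepFun Y C ℙ)
    (fY fC : ℝ → ℝ)
    (hfY : ∀ s : Set ℝ, MeasurableSet s → (ℙ (Y ⁻¹' s)).toReal = ∫ u in s, fY u)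
    (hfC : ∀ s : Set ℝ, MeasurableSet s → (ℙ (C ⁻¹' s)).toReal = ∫ u in s, fC u)
    (SC : ℝ → ℝ) (hSC : ∀ t, SC t = (ℙ {ω | t < C ω}).toReal)
    (hSCpos : ∀ t, 0 < SC t)
    (Fp : ℝ → ℝ) (τstar : ℝ) (hτ : 0 < τstar)
    (hint : Integrable (fun ω =>
      (if Y ω ≤ C ω then (1:ℝ) else 0)
        * (∫ τ in (0:ℝ)..τstar, ((if min (Y ω) (C ω) ≤ τ then (1:ℝ) else 0) - Fp τ) ^ 2)
        / SC (min (Y ω) (C ω))) ℙ) :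
    ∫ ω, (if Y ω ≤ C ω then (1:ℝ) else 0)
        * (∫ τ in (0:ℝ)..τstar, ((if min (Y ω) (C ω) ≤ τ then (1:ℝ) else 0) - Fp τ) ^ 2)
        / SC (min (Y ω) (C ω)) ∂ℙ
      = ∫ ω, ∫ τ in (0:ℝ)..τstar, ((if Y ω ≤ τ then (1:ℝ) else 0) - Fp τ) ^ 2 ∂ℙ := by
  set g : ℝ → ℝ := fun y => ∫ τ in (0:ℝ)..τstar, ((if y ≤ τ then (1:ℝ) else 0) - Fp τ) ^ 2
    with hgdef
  have hg : Measurable g := measurable_g Fp τstar hτ.le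
  -- SC is antitone, hence measurable
  have hSCanti : Antitone SC := by
    intro a b hab
    rw [hSC a, hSC b]
    exact ENNReal.toReal_mono (measure_ne_top _ _)
      (measure_mono fun ω hω => lt_of_le_of_lt hab hω)
  have hSCm : Measurable SC := hSCanti.measurable
  set Φ : ℝ × ℝ → ℝ := fun p => (if p.1 ≤ p.2 then (1:ℝ) else 0) * g p.1 / SC p.1 with hΦdef
  have hΦm : Measurable Φ := by
    refine Measurable.div ?_ (hSCm.comp measurable_fst)
    exact (Measurable.ite (measurableSet_le measurable_fst measurable_snd)
      measurable_const measurable_const).mul (hg.comp measurable_fst)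
  have hpt : ∀ ω, (if Y ω ≤ C ω then (1:ℝ) else 0)
      * (∫ τ in (0:ℝ)..τstar, ((if min (Y ω) (C ω) ≤ τ then (1:ℝ) else 0) - Fp τ) ^ 2)
      / SC (min (Y ω) (C ω)) = Φ (Y ω, C ω) := by
    intro ω
    by_cases hω : Y ω ≤ C ω
    · simp only [hΦdef, hω, if_pos, min_eq_left hω, hgdef]
    · simp only [hΦdef, hω, if_neg, if_false, zero_mul, zero_div]
  have hYC : AEMeasurable (fun ω => (Y ω, C ω)) ℙ := (hY.prodMk hC).aemeasurable
  have hjoint : Measure.map (fun ω => (Y ω, C ω)) ℙ = (Measure.map Y ℙ).prod (Measure.map C ℙ) :=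
    (indepFun_iff_map_prod_eq_prod_map_map hY.aemeasurable hC.aemeasurable).mp hindep
  have hintΦ : Integrable Φ ((Measure.map Y ℙ).prod (Measure.map C ℙ)) := by
    rw [← hjoint, integrable_map_measure hΦm.aestronglyMeasurable hYC]
    exact hint.congr (Filter.Eventually.of_forall hpt)
  -- key: the C-marginal of [y, ∞) has mass SC y
  have hIci : ∀ y : ℝ, ((Measure.map C ℙ) (Ici y)).toReal = SC y := by
    intro y
    have h0' : (ℙ (C ⁻¹' {y})).toReal = 0 := by
      rw [hfC {y} (measurableSet_singleton y)]
      rw [show (volume.restrict {y} : Measure ℝ) = 0 from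
        Measure.restrict_eq_zero.mpr (measure_singleton y), integral_zero_measure]
    have h0 : ℙ (C ⁻¹' {y}) = 0 := by
      rcases (ENNReal.toReal_eq_zero_iff _).mp h0' with h | h
      · exact h
      · exact absurd h (measure_ne_top _ _)
    have hunion : C ⁻¹' Ici y = C ⁻¹' Ioi y ∪ C ⁻¹' {y} := by
      rw [← Set.preimage_union, Set.Ioi_union_left]
    have hmeas : ℙ (C ⁻¹' Ici y) = ℙ (C ⁻¹' Ioi y) := by
      refine le_antisymm ?_ (measure_mono (Set.preimage_mono Set.Ioi_subset_Ici_self))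
      calc ℙ (C ⁻¹' Ici y) = ℙ (C ⁻¹' Ioi y ∪ C ⁻¹' {y}) := by rw [hunion]
        _ ≤ ℙ (C ⁻¹' Ioi y) + ℙ (C ⁻¹' {y}) := measure_union_le _ _
        _ = ℙ (C ⁻¹' Ioi y) := by rw [h0, add_zero]
    rw [Measure.map_apply hC measurableSet_Ici, hmeas, hSC y]
    rfl
  have hinner : ∀ y : ℝ, (∫ c, Φ (y, c) ∂(Measure.map C ℙ)) = g y := by
    intro y
    have hptc : ∀ c : ℝ, Φ (y, c) = (g y / SC y) * (Ici y).indicator (fun _ => (1:ℝ)) c := by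
      intro c
      by_cases hc : y ≤ c
      · simp [hΦdef, hc, Set.indicator_of_mem (mem_Ici.mpr hc), mul_comm, mul_div_assoc]
      · simp [hΦdef, hc, Set.indicator_of_notMem (fun h => hc (mem_Ici.mp h))]
    rw [integral_congr_ae (Filter.Eventually.of_forall hptc), integral_const_mul,
      integral_indicator_const (1:ℝ) measurableSet_Ici, smul_eq_mul, mul_one, measureReal_def, hIci y,
      div_mul_cancel₀ _ (hSCpos y).ne']
  calc ∫ ω, (if Y ω ≤ C ω then (1:ℝ) else 0)
        * (∫ τ in (0:ℝ)..τstar, ((if min (Y ω) (C ω) ≤ τ then (1:ℝ) else 0) - Fp τ) ^ 2)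
        / SC (min (Y ω) (C ω)) ∂ℙ
      = ∫ ω, Φ (Y ω, C ω) ∂ℙ := integral_congr_ae (Filter.Eventually.of_forall hpt)
    _ = ∫ p, Φ p ∂(Measure.map (fun ω => (Y ω, C ω)) ℙ) :=
        (integral_map hYC hΦm.aestronglyMeasurable).symm
    _ = ∫ p, Φ p ∂((Measure.map Y ℙ).prod (Measure.map C ℙ)) := by rw [hjoint]
    _ = ∫ y, ∫ c, Φ (y, c) ∂(Measure.map C ℙ) ∂(Measure.map Y ℙ) := integral_prod Φ hintΦ
    _ = ∫ y, g y ∂(Measure.map Y ℙ) := integral_congr_ae (Filter.Eventually.of_forall hinner)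
    _ = ∫ ω, g (Y ω) ∂ℙ := integral_map hY.aemeasurable hg.aestronglyMeasurable
    _ = _ := rfl
end
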